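/- arXiv:2103.01189 — 2 statements merged into one kernel-verified Lean document; each statement's English description precedes it below -/
import Mathlib

section
/- For any types A and B, there is an equivalence of categories between the category Learn(A,B) of learners from A to B and the category of coalgebras for the internal hom polynomial [Ay^A, By^B], i.e., the category of coalgebras for the endofunctor of types X ↦ (A → B) × (A × B → A) × (A × B → X). -/
universe u

open CategoryTheory

structure Learner (A B : Type u) : Type (u + 1) where
  P : Type u
  impl : A × P → B
  upd : A × B × P → P
  req : A × B × P → A

instance Learner.category (A B : Type u) : Category (Learner A B) where
  Hom L L' :=
    { f : L.P → L'.P //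
      (∀ (a : A) (p : L.P), L.impl (a, p) = L'.impl (a, f p)) ∧
      (∀ (a : A) (b : B) (p : L.P), L.req (a, b, p) = L'.req (a, b, f p)) ∧
      (∀ (a : A) (b : B) (p : L.P), f (L.upd (a, b, p)) = L'.upd (a, b, f p)) }
  id L := ⟨id, fun _ _ => rfl, fun _ _ _ => rfl, fun _ _ _ => rfl⟩
  comp {L L' L''} f g := ⟨g.1 ∘ f.1, by
    obtain ⟨f, hfI, hfR, hfU⟩ := f
    obtain ⟨g, hgI, hgR, hgU⟩ := g
    refine ⟨fun a p => ?_, fun a b p => ?_, fun a b p => ?_⟩ <;>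
      simp [hfI, hfR, hfU, hgI, hgR, hgU]⟩
  id_comp f := Subtype.ext rfl
  comp_id f := Subtype.ext rfl
  assoc f g h := Subtype.ext rfl

def learnFunctor (A B : Type u) : Type u ⥤ Type u where
  obj X := (A → B) × (A × B → A) × (A × B → X)
  map f := TypeCat.ofHom fun x => (x.1, x.2.1, f ∘ x.2.2)

def toCoalg (A B : Type u) : Learner A B ⥤ Endofunctor.Coalgebra (learnFunctor A B) where
  obj L := ⟨L.P, TypeCat.ofHom fun p => (fun a => L.impl (a, p), fun ab => L.req (ab.1, ab.2, p),
    fun ab => L.upd (ab.1, ab.2, p))⟩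
  map {L L'} f := ⟨TypeCat.ofHom f.1, by
    obtain ⟨f, hI, hR, hU⟩ := f
    ext p
    simp only [learnFunctor, types_comp_apply]
    refine Prod.ext ?_ (Prod.ext ?_ ?_) <;> funext x
    · exact hI x p
    · exact hR x.1 x.2 p
    · exact hU x.1 x.2 p⟩
  map_id L := rfl
  map_comp f g := rfl

def fromCoalg (A B : Type u) : Endofunctor.Coalgebra (learnFunctor A B) ⥤ Learner A B where
  obj V := ⟨V.V, fun ap => (show (A → B) × (A × B → A) × (A × B → V.V) from V.str ap.2).1 ap.1,
    fun abp => (show (A → B) × (A × B → A) × (A × B → V.V) from V.str abp.2.2).2.2 (abp.1, abp.2.1),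
    fun abp => (show (A → B) × (A × B → A) × (A × B → V.V) from V.str abp.2.2).2.1 (abp.1, abp.2.1)⟩
  map {V V'} f := ⟨⇑f.f, by
    have h := f.h
    refine ⟨fun a p => ?_, fun a b p => ?_, fun a b p => ?_⟩ <;>
    · have := ConcreteCategory.congr_hom h p
      change _ = V'.str (f.f p) at this
      dsimp only
      rw [← this]; try rfl⟩
  map_id V := rfl
  map_comp f g := rfl

/-- for any types `A` and `B`, the category `Learn(A,B)` of
learners is equivalent to the category of coalgebras for the endofunctor
`X ↦ (A → B) × (A × B → A) × (A × B → X)` induced by `[Ay^A, By^B]`. -/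
theorem learn_equiv_coalg (A B : Type u) :
    Nonempty (Learner A B ≌ Endofunctor.Coalgebra (learnFunctor A B)) := by
  refine ⟨CategoryTheory.Equivalence.mk (toCoalg A B) (fromCoalg A B) ?_ ?_⟩
  · exact NatIso.ofComponents (fun L => eqToIso (by
      obtain ⟨P, I, U, R⟩ := L; rfl)) (by
      intro L L' f
      apply Subtype.ext
      obtain ⟨P, I, U, R⟩ := L; obtain ⟨P', I', U', R'⟩ := L'
      rfl)
  · exact NatIso.ofComponents (fun V => eqToIso (by
      obtain ⟨V, s⟩ := V; rfl)) (by
      intro V V' f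
      apply Endofunctor.Coalgebra.Hom.ext
      obtain ⟨V, s⟩ := V; obtain ⟨V', s'⟩ := V'
      rfl)
end

section
/- For any polynomial functor p, there is an equivalence of categories between the category of p-coalgebras and the category of Type-valued functors on the free category on the quiver Tree_p of p-trees, where Tree_p has as vertices the p-trees and, for each p-tree T with root label i ∈ p(1), one arrow out of T for each direction d ∈ p[i], with target the child subtree of T along d. -/
universe u

open CategoryTheory

/-- A `p`-coalgebra: a type together with a structure map `S → p(S)`. -/
structure Coalg (p : PFunctor.{u, u}) : Type (u + 1) where
  carrier : Type u
  str : carrier → p.Obj carrier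

/-- The category of `p`-coalgebras: morphisms are functions commuting with the
structure maps. -/
instance Coalg.category (p : PFunctor.{u, u}) : Category (Coalg p) where
  Hom X Y := { f : X.carrier → Y.carrier // ∀ s, p.map f (X.str s) = Y.str (f s) }
  id X := ⟨id, fun s => by simp⟩
  comp {X Y Z} f g := ⟨g.1 ∘ f.1, fun s => by
    rw [← PFunctor.map_map, f.2 s, g.2 (f.1 s)]; rfl⟩
  id_comp f := Subtype.ext rfl
  comp_id f := Subtype.ext rfl
  assoc f g h := Subtype.ext rfl

/-- The quiver `Tree_p` of `p`-trees: vertices are `p`-trees (elements of the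
M-type of `p`) and an arrow `T ⟶ T'` is a direction `d` at the root of `T`
whose child subtree is `T'`. -/
instance treeQuiver (p : PFunctor.{u, u}) : Quiver (PFunctor.M p) where
  Hom T T' := { d : p.B (PFunctor.M.dest T).1 // (PFunctor.M.dest T).2 d = T' }

namespace CE

variable {p : PFunctor.{u, u}}

/-- behavior map -/
def beh (X : Coalg p) : X.carrier → PFunctor.M p := PFunctor.M.corec X.str

lemma dest_beh (X : Coalg p) (s : X.carrier) :
    PFunctor.M.dest (beh X s) = ⟨(X.str s).1, fun d => beh X ((X.str s).2 d)⟩ := by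
  rw [beh, PFunctor.M.dest_corec]; rfl

def transport {A : Type u} {x y : p.Obj A} (h : x = y) (d : p.B x.1) : p.B y.1 :=
  cast (congrArg (fun z => p.B z.1) h) d

lemma snd_eq {A : Type u} {x y : p.Obj A} (h : x = y) (d : p.B x.1) :
    x.2 d = y.2 (transport h d) := by subst h; rfl

def fiber (X : Coalg p) (T : PFunctor.M p) : Type u := {s : X.carrier // beh X s = T}

lemma dest_eq (X : Coalg p) {T : PFunctor.M p} (s : X.carrier) (hs : beh X s = T) :
    PFunctor.M.dest T = ⟨(X.str s).1, fun e => beh X ((X.str s).2 e)⟩ := by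
  subst hs; exact dest_beh X s

lemma fiber_step (X : Coalg p) {T T' : PFunctor.M p} (d : T ⟶ T') (s : X.carrier)
    (hs : beh X s = T) :
    beh X ((X.str s).2 (transport (x := PFunctor.M.dest T) (dest_eq X s hs) d.1)) = T' := by
  refine Eq.trans ?_ d.2
  exact (snd_eq (dest_eq X s hs) d.1).symm

def pre (X : Coalg p) : PFunctor.M p ⥤q Type u where
  obj T := fiber X T
  map {T _} d := TypeCat.ofHom fun x =>
    ⟨(X.str x.1).2 (transport (x := PFunctor.M.dest T) (dest_eq X x.1 x.2) d.1),
      fiber_step X d x.1 x.2⟩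

def toFun (X : Coalg p) : Paths (PFunctor.M p) ⥤ Type u := Paths.lift (pre X)

lemma transport_transport {A : Type u} {x y z : p.Obj A} (h1 : x = y) (h2 : y = z)
    (d : p.B x.1) : transport h2 (transport h1 d) = transport (h1.trans h2) d := by
  subst h1; subst h2; rfl

/-- naturality for all paths follows from naturality on arrows -/
lemma nat_of_arrows {F G : Paths (PFunctor.M p) ⥤ Type u}
    (app : ∀ T : PFunctor.M p, F.obj T → G.obj T)
    (h : ∀ {T T' : PFunctor.M p} (d : T ⟶ T') (x : F.obj T),
      app T' (F.map d.toPath x) = G.map d.toPath (app T x)) :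
    ∀ {T T' : Paths (PFunctor.M p)} (f : T ⟶ T') (x : F.obj T),
      app T' (F.map f x) = G.map f (app T x) := by
  intro T T' f
  change @Quiver.Path (PFunctor.M p) _ T T' at f
  induction f with
  | nil =>
    intro x
    show app T (F.map (𝟙 T) x) = G.map (𝟙 T) (app T x)
    simp
  | cons q e ih =>
    intro x
    rename_i c b
    refine (congrArg (app b) (types_congr_hom (F.map_comp q
        (@Quiver.Hom.toPath (PFunctor.M p) (treeQuiver p) c b e)) x)).trans
      (Eq.trans ?_ (types_congr_hom (G.map_comp q
        (@Quiver.Hom.toPath (PFunctor.M p) (treeQuiver p) c b e)) (app T x)).symm)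
    simp only [types_comp_apply]
    rw [h e (F.map q x), ih x]

lemma beh_nat {X Y : Coalg p} (f : X ⟶ Y) (s : X.carrier) : beh Y (f.1 s) = beh X s := by
  have := PFunctor.M.corec_unique X.str (fun s => beh Y (f.1 s)) (fun s => by
    show PFunctor.M.dest (beh Y (f.1 s)) = _
    rw [beh, PFunctor.M.dest_corec, ← f.2 s]
    rfl)
  exact congrFun this s

lemma toF_arrow_nat' {X Y : Coalg p} (f : X ⟶ Y) {T T' : PFunctor.M p} (d : T ⟶ T')
    (x : fiber X T) :
    (⟨f.1 ((pre X).map d x).1, (beh_nat f _).trans ((pre X).map d x).2⟩ : fiber Y T')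
      = (pre Y).map d ⟨f.1 x.1, (beh_nat f x.1).trans x.2⟩ := by
  apply Subtype.ext
  show f.1 ((X.str x.1).2 (transport (x := PFunctor.M.dest T) (dest_eq X x.1 x.2) d.1))
      = (Y.str (f.1 x.1)).2 (transport (x := PFunctor.M.dest T)
          (dest_eq Y (f.1 x.1) ((beh_nat f x.1).trans x.2)) d.1)
  rw [snd_eq (f.2 x.1).symm (transport (x := PFunctor.M.dest T)
      (dest_eq Y (f.1 x.1) ((beh_nat f x.1).trans x.2)) d.1)]
  show f.1 ((X.str x.1).2 _) = f.1 ((X.str x.1).2 _)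
  refine congrArg f.1 (congrArg (X.str x.1).2 ?_)
  apply eq_of_heq
  refine HEq.trans (cast_heq _ _) ?_
  exact ((cast_heq _ _).trans (cast_heq _ _)).symm

def toF : Coalg p ⥤ (Paths (PFunctor.M p) ⥤ Type u) where
  obj X := toFun X
  map {X Y} f :=
    { app := fun T => TypeCat.ofHom fun x => (⟨f.1 x.1, (beh_nat f x.1).trans x.2⟩ : fiber Y T)
      naturality := fun T T' g => ConcreteCategory.hom_ext _ _ fun x => by
        exact (nat_of_arrows (F := toFun X) (G := toFun Y)
          (fun T x => (⟨f.1 x.1, (beh_nat f x.1).trans x.2⟩ : fiber Y T))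
          (fun {T T'} d x => by
            rw [show (toFun X).map d.toPath = (pre X).map d from Paths.lift_toPath _ d,
              show (toFun Y).map d.toPath = (pre Y).map d from Paths.lift_toPath _ d]
            exact toF_arrow_nat' f d x) g x) }
  map_id X := rfl
  map_comp f g := rfl

def sumCoalg (G : Paths (PFunctor.M p) ⥤ Type u) : Coalg p where
  carrier := Σ T : PFunctor.M p, G.obj T
  str x := ⟨(PFunctor.M.dest x.1).1, fun d =>
    ⟨(PFunctor.M.dest x.1).2 d,
      G.map (Quiver.Hom.toPath (V := PFunctor.M p) ⟨d, rfl⟩) x.2⟩⟩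

lemma beh_sum (G : Paths (PFunctor.M p) ⥤ Type u) (x : (sumCoalg G).carrier) :
    beh (sumCoalg G) x = x.1 := by
  have := PFunctor.M.corec_unique (sumCoalg G).str (fun x => x.1) (fun x => rfl)
  exact (congrFun this x).symm

def fromF : (Paths (PFunctor.M p) ⥤ Type u) ⥤ Coalg p where
  obj G := sumCoalg G
  map {G H} η := ⟨fun x => ⟨x.1, η.app x.1 x.2⟩, fun x => by
    show (⟨(PFunctor.M.dest x.1).1, _⟩ : p.Obj _) = ⟨(PFunctor.M.dest x.1).1, _⟩
    exact congrArg (Sigma.mk _) (funext fun d =>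
      congrArg (Sigma.mk _) (types_congr_hom (η.naturality _) x.2))⟩
  map_id G := rfl
  map_comp f g := rfl

lemma fiber_pair_eq (X : Coalg p) {T₁ T₂ : PFunctor.M p} {x₁ : fiber X T₁} {x₂ : fiber X T₂}
    (h : x₁.1 = x₂.1) : (⟨T₁, x₁⟩ : Σ T, fiber X T) = ⟨T₂, x₂⟩ := by
  obtain ⟨c, rfl⟩ := x₁
  obtain ⟨c', rfl⟩ := x₂
  cases h
  rfl

lemma unit_str (X : Coalg p) (s : X.carrier) :
    p.map (fun s => (⟨beh X s, ⟨s, rfl⟩⟩ : Σ T, fiber X T)) (X.str s)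
      = (sumCoalg (toFun X)).str ⟨beh X s, ⟨s, rfl⟩⟩ := by
  refine Sigma.ext (congrArg Sigma.fst (dest_beh X s)).symm ?_
  refine Function.hfunext
    (congrArg (fun (y : p.Obj (PFunctor.M p)) => p.B y.1) (dest_beh X s)).symm ?_
  intro a a' haa'
  refine heq_of_eq (fiber_pair_eq X ?_)
  show (X.str s).2 a
      = (X.str s).2 (transport (x := PFunctor.M.dest (beh X s)) (dest_eq X s rfl) a')
  refine congrArg (X.str s).2 ?_
  exact eq_of_heq (haa'.trans (cast_heq _ _).symm)

lemma inv_str (X : Coalg p) (x : (sumCoalg (toFun X)).carrier) :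
    p.map (fun (x : (sumCoalg (toFun X)).carrier) => x.2.1) ((sumCoalg (toFun X)).str x)
      = X.str x.2.1 := by
  obtain ⟨T, s, hs⟩ := x
  refine Sigma.ext ?_ ?_
  · show (PFunctor.M.dest T).fst = (X.str s).fst
    exact congrArg Sigma.fst (dest_eq X s hs)
  refine Function.hfunext
    (congrArg (fun (y : p.Obj (PFunctor.M p)) => p.B y.1) (dest_eq X s hs)) ?_
  intro a a' haa'
  refine heq_of_eq ?_
  show (X.str s).2 (transport (x := PFunctor.M.dest T) (dest_eq X s hs) a) = (X.str s).2 a'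
  refine congrArg (X.str s).2 ?_
  exact eq_of_heq ((cast_heq _ _).trans haa')

def unitIsoApp (X : Coalg p) : X ≅ (toF ⋙ fromF).obj X where
  hom := ⟨fun s => ⟨beh X s, ⟨s, rfl⟩⟩, unit_str X⟩
  inv := ⟨fun x => x.2.1, inv_str X⟩
  hom_inv_id := Subtype.ext rfl
  inv_hom_id := Subtype.ext (funext fun x => by
    obtain ⟨T, s, rfl⟩ := x
    rfl)

/-- the counit's forward components -/
def capp (G : Paths (PFunctor.M p) ⥤ Type u) (T : PFunctor.M p)
    (x : fiber (sumCoalg G) T) : G.obj T :=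
  G.map (eqToHom ((beh_sum G x.1).symm.trans x.2)) x.1.2

lemma capp_nat (G : Paths (PFunctor.M p) ⥤ Type u) {T T' : PFunctor.M p} (d : T ⟶ T')
    (x : fiber (sumCoalg G) T) :
    capp G T' ((pre (sumCoalg G)).map d x) = G.map d.toPath (capp G T x) := by
  obtain ⟨⟨T₀, g⟩, hx⟩ := x
  have e₁ : T₀ = T := (beh_sum G ⟨T₀, g⟩).symm.trans hx
  subst e₁
  obtain ⟨d₀, hd⟩ := d
  subst hd
  show G.map (eqToHom _) (G.map _ g) = G.map _ (G.map (eqToHom _) g)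
  erw [eqToHom_refl, eqToHom_refl, CategoryTheory.Functor.map_id, CategoryTheory.Functor.map_id]
  rfl

def counitHom (G : Paths (PFunctor.M p) ⥤ Type u) : toFun (sumCoalg G) ⟶ G where
  app T := TypeCat.ofHom (capp G T)
  naturality T T' f := ConcreteCategory.hom_ext _ _ fun x => by
    refine nat_of_arrows (F := toFun (sumCoalg G)) (G := G) (capp G)
      (fun {T T'} d x => ?_) f x
    rw [show (toFun (sumCoalg G)).map d.toPath = (pre (sumCoalg G)).map d from
      Paths.lift_toPath _ d]
    exact capp_nat G d x

lemma cinv_nat (G : Paths (PFunctor.M p) ⥤ Type u) {T T' : PFunctor.M p} (d : T ⟶ T')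
    (y : G.obj T) :
    (⟨⟨T', G.map d.toPath y⟩, beh_sum G _⟩ : fiber (sumCoalg G) T')
      = (pre (sumCoalg G)).map d ⟨⟨T, y⟩, beh_sum G _⟩ := by
  obtain ⟨d₀, hd⟩ := d
  subst hd
  rfl

def counitInv (G : Paths (PFunctor.M p) ⥤ Type u) : G ⟶ toFun (sumCoalg G) where
  app T := TypeCat.ofHom fun y => (⟨⟨T, y⟩, beh_sum G _⟩ : fiber (sumCoalg G) T)
  naturality T T' f := ConcreteCategory.hom_ext _ _ fun y => by
    refine nat_of_arrows (F := G) (G := toFun (sumCoalg G))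
      (fun T y => (⟨⟨T, y⟩, beh_sum G _⟩ : fiber (sumCoalg G) T))
      (fun {T T'} d y => ?_) f y
    rw [show (toFun (sumCoalg G)).map d.toPath = (pre (sumCoalg G)).map d from
      Paths.lift_toPath _ d]
    exact cinv_nat G d y

def counitIsoApp (G : Paths (PFunctor.M p) ⥤ Type u) : (fromF ⋙ toF).obj G ≅ G where
  hom := counitHom G
  inv := counitInv G
  hom_inv_id := by
    ext T x
    obtain ⟨⟨T₀, g⟩, hx⟩ := x
    have e₁ : T₀ = T := (beh_sum G ⟨T₀, g⟩).symm.trans hx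
    subst e₁
    show (⟨⟨T₀, G.map (eqToHom ((beh_sum G ⟨T₀, g⟩).symm.trans hx)) g⟩, _⟩ :
        fiber (sumCoalg G) T₀) = ⟨⟨T₀, g⟩, hx⟩
    apply Subtype.ext
    show (⟨T₀, G.map (eqToHom ((beh_sum G ⟨T₀, g⟩).symm.trans hx)) g⟩ : Σ T, G.obj T)
        = ⟨T₀, g⟩
    congr 1
    erw [eqToHom_refl, CategoryTheory.Functor.map_id]
    rfl
  inv_hom_id := by
    ext T y
    show G.map (eqToHom (rfl : T = T)) y = y
    erw [eqToHom_refl, CategoryTheory.Functor.map_id]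
    rfl

def unitIso : 𝟭 (Coalg p) ≅ toF ⋙ (fromF : (Paths (PFunctor.M p) ⥤ Type u) ⥤ Coalg p) :=
  NatIso.ofComponents unitIsoApp (fun {X Y} f => by
    apply Subtype.ext
    funext s
    show (⟨beh Y (f.1 s), ⟨f.1 s, rfl⟩⟩ : Σ T, fiber Y T) = _
    exact fiber_pair_eq Y rfl)

def counitIso : (fromF : (Paths (PFunctor.M p) ⥤ Type u) ⥤ Coalg p) ⋙ toF ≅ 𝟭 _ :=
  NatIso.ofComponents counitIsoApp (fun {G H} η => by
    ext T x
    obtain ⟨⟨T₀, g⟩, hx⟩ := x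
    have e₁ : T₀ = T := (beh_sum G ⟨T₀, g⟩).symm.trans hx
    subst e₁
    show H.map (eqToHom _) (η.app T₀ g) = η.app T₀ (G.map (eqToHom _) g)
    erw [eqToHom_refl, CategoryTheory.Functor.map_id, CategoryTheory.Functor.map_id]
    rfl)

def equivalence : Coalg p ≌ (Paths (PFunctor.M p) ⥤ Type u) :=
  CategoryTheory.Equivalence.mk toF fromF unitIso counitIso

end CE

/-- the category of `p`-coalgebras is equivalent to the category
of `Type`-valued functors on the free category on the quiver of `p`-trees. -/
theorem coalg_equiv_copresheaves_on_trees (p : PFunctor.{u, u}) :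
    Nonempty (Coalg p ≌ Paths (PFunctor.M p) ⥤ Type u) := by
  exact ⟨CE.equivalence⟩
end
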